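/- arXiv:2401.05645 — 2 statements merged into one kernel-verified Lean document; each statement's English description precedes it below -/
import Mathlib

section
/- Let B be the one-point extension of A by an A-module M. If T_A is an ICE-closed subcategory of mod A, then the full subcategory T_B of mod B consisting of all triples (N, V, f) with N ∈ T_A, together with all triples (0, V, 0), is an ICE-closed subcategory of mod B. -/
open CategoryTheory Limits TensorProduct

section OnePointExtension

variable (k : Type) [Field k] (A : Type) [Ring A] [Algebra k A]
  (M : Type) [AddCommGroup M] [Module k M] [Module A M] [IsScalarTower k A M]

/-- The underlying set of the one-point extension `B = [[A,0],[M,k]]` of `A`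
by the (`A`,`k`)-bimodule `M`: triples `(a, m, c)`. -/
abbrev OPE := A × M × k

/-- The triangular matrix ring structure on `B = [[A,0],[M,k]]`. -/
instance : Ring (OPE k A M) where
  __ := (inferInstance : AddCommGroup (A × M × k))
  mul x y := (x.1 * y.1, x.1 • y.2.1 + y.2.2 • x.2.1, x.2.2 * y.2.2)
  one := (1, 0, 1)
  mul_assoc x y z := by
    refine Prod.ext (mul_assoc _ _ _) (Prod.ext ?_ (mul_assoc _ _ _))
    show (x.1 * y.1) • z.2.1 + z.2.2 • (x.1 • y.2.1 + y.2.2 • x.2.1)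
        = x.1 • (y.1 • z.2.1 + z.2.2 • y.2.1) + (y.2.2 * z.2.2) • x.2.1
    rw [mul_smul, smul_add, smul_add, smul_comm z.2.2 x.1, mul_comm y.2.2 z.2.2, mul_smul]
    abel
  one_mul x := by
    refine Prod.ext (one_mul _) (Prod.ext ?_ (one_mul _))
    show (1 : A) • x.2.1 + x.2.2 • (0 : M) = x.2.1
    simp
  mul_one x := by
    refine Prod.ext (mul_one _) (Prod.ext ?_ (mul_one _))
    show x.1 • (0 : M) + (1 : k) • x.2.1 = x.2.1
    simp
  left_distrib x y z := by
    refine Prod.ext (left_distrib _ _ _) (Prod.ext ?_ (left_distrib _ _ _))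
    show x.1 • (y.2.1 + z.2.1) + (y.2.2 + z.2.2) • x.2.1
        = (x.1 • y.2.1 + y.2.2 • x.2.1) + (x.1 • z.2.1 + z.2.2 • x.2.1)
    rw [smul_add, add_smul]; abel
  right_distrib x y z := by
    refine Prod.ext (right_distrib _ _ _) (Prod.ext ?_ (right_distrib _ _ _))
    show (x.1 + y.1) • z.2.1 + z.2.2 • (x.2.1 + y.2.1)
        = (x.1 • z.2.1 + z.2.2 • x.2.1) + (y.1 • z.2.1 + z.2.2 • y.2.1)
    rw [add_smul, smul_add]; abel
  zero_mul x := by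
    refine Prod.ext (zero_mul _) (Prod.ext ?_ (zero_mul _))
    show (0 : A) • x.2.1 + x.2.2 • (0 : M) = 0
    simp
  mul_zero x := by
    refine Prod.ext (mul_zero _) (Prod.ext ?_ (mul_zero _))
    show x.1 • (0 : M) + (0 : k) • x.2.1 = 0
    simp

/-- The canonical projection `B → A`, a ring homomorphism. -/
def OPE.toA : OPE k A M →+* A where
  toFun x := x.1
  map_one' := rfl
  map_mul' _ _ := rfl
  map_zero' := rfl
  map_add' _ _ := rfl

/-- The canonical projection `B → k`, a ring homomorphism. -/
def OPE.tok : OPE k A M →+* k where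
  toFun x := x.2.2
  map_one' := rfl
  map_mul' _ _ := rfl
  map_zero' := rfl
  map_add' _ _ := rfl

/-- The embedding `mod A → mod B`, `N ↦ (N, 0, 0)`. -/
noncomputable def OPE.F : ModuleCat A ⥤ ModuleCat (OPE k A M) :=
  ModuleCat.restrictScalars (OPE.toA k A M)

/-- The embedding of `k`-vector spaces into `mod B`, `V ↦ (0, V, 0)`. -/
noncomputable def OPE.G : ModuleCat k ⥤ ModuleCat (OPE k A M) :=
  ModuleCat.restrictScalars (OPE.tok k A M)

/-- The `B`-module structure on `N × V` associated to a triple `(N, V, f)` with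
`f : M ⊗_k V → N` an `A`-linear map: `(a,m,c) • (n,v) = (a • n + f (m ⊗ v), c • v)`. -/
noncomputable def OPE.tripModule (N : Type) [AddCommGroup N] [Module A N]
    (V : Type) [AddCommGroup V] [Module k V] (f : M ⊗[k] V →ₗ[A] N) :
    Module (OPE k A M) (N × V) where
  smul b x := (b.1 • x.1 + f (b.2.1 ⊗ₜ[k] x.2), b.2.2 • x.2)
  one_smul x := by
    refine Prod.ext ?_ (one_smul _ _)
    show (1 : A) • x.1 + f ((0 : M) ⊗ₜ[k] x.2) = x.1
    simp
  mul_smul b b' x := by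
    refine Prod.ext ?_ (mul_smul _ _ _)
    show (b.1 * b'.1) • x.1 + f ((b.1 • b'.2.1 + b'.2.2 • b.2.1) ⊗ₜ[k] x.2)
        = b.1 • (b'.1 • x.1 + f (b'.2.1 ⊗ₜ[k] x.2)) + f (b.2.1 ⊗ₜ[k] (b'.2.2 • x.2))
    rw [add_tmul, map_add, ← smul_tmul', map_smul, smul_tmul, mul_smul, smul_add]; abel
  smul_zero b := by
    refine Prod.ext ?_ (smul_zero _)
    show b.1 • (0 : N) + f (b.2.1 ⊗ₜ[k] (0 : V)) = 0
    simp
  smul_add b x y := by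
    refine Prod.ext ?_ (smul_add _ _ _)
    show b.1 • (x.1 + y.1) + f (b.2.1 ⊗ₜ[k] (x.2 + y.2))
        = (b.1 • x.1 + f (b.2.1 ⊗ₜ[k] x.2)) + (b.1 • y.1 + f (b.2.1 ⊗ₜ[k] y.2))
    rw [tmul_add, map_add, smul_add]; abel
  add_smul b b' x := by
    refine Prod.ext ?_ (add_smul _ _ _)
    show (b.1 + b'.1) • x.1 + f ((b.2.1 + b'.2.1) ⊗ₜ[k] x.2)
        = (b.1 • x.1 + f (b.2.1 ⊗ₜ[k] x.2)) + (b'.1 • x.1 + f (b'.2.1 ⊗ₜ[k] x.2))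
    rw [add_tmul, map_add, add_smul]; abel
  zero_smul x := by
    refine Prod.ext ?_ (zero_smul _ _)
    show (0 : A) • x.1 + f ((0 : M) ⊗ₜ[k] x.2) = 0
    simp

/-- The `B`-module corresponding to the triple `(N, V, f)`. -/
noncomputable def OPE.Trip (N : ModuleCat A) (V : ModuleCat k) (f : M ⊗[k] V →ₗ[A] N) :
    ModuleCat (OPE k A M) :=
  letI := OPE.tripModule k A M N V f
  ModuleCat.of (OPE k A M) (N × V)

end OnePointExtension
open CategoryTheory Limits

section Defs
variable {C : Type*} [Category C] [Abelian C]

/-- `T` is closed under isomorphisms. -/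
def IsoClosed (T : Set C) : Prop := ∀ ⦃X Y : C⦄, (X ≅ Y) → X ∈ T → Y ∈ T

/-- `T` is closed under images of morphisms between its objects. -/
def ClosedUnderImages (T : Set C) : Prop :=
  ∀ ⦃X Y : C⦄, X ∈ T → Y ∈ T → ∀ f : X ⟶ Y, image f ∈ T

/-- `T` is closed under cokernels of morphisms between its objects. -/
def ClosedUnderCokernels (T : Set C) : Prop :=
  ∀ ⦃X Y : C⦄, X ∈ T → Y ∈ T → ∀ f : X ⟶ Y, cokernel f ∈ T

/-- `T` is closed under kernels of morphisms between its objects. -/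
def ClosedUnderKernels (T : Set C) : Prop :=
  ∀ ⦃X Y : C⦄, X ∈ T → Y ∈ T → ∀ f : X ⟶ Y, kernel f ∈ T

/-- `T` is closed under extensions. -/
def ClosedUnderExtensions (T : Set C) : Prop :=
  ∀ (S : ShortComplex C), S.ShortExact → S.X₁ ∈ T → S.X₃ ∈ T → S.X₂ ∈ T

/-- `T` is closed under quotients (images of epimorphisms). -/
def ClosedUnderQuotients (T : Set C) : Prop :=
  ∀ ⦃X Y : C⦄, ∀ f : X ⟶ Y, Epi f → X ∈ T → Y ∈ T

/-- An ICE-closed subcategory: closed under images, cokernels and extensions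
(and isomorphisms, being a subcategory). -/
def IsICEClosed (T : Set C) : Prop :=
  IsoClosed T ∧ ClosedUnderImages T ∧ ClosedUnderCokernels T ∧ ClosedUnderExtensions T

/-- A torsion class: closed under quotients and extensions. -/
def IsTorsionClass (T : Set C) : Prop :=
  IsoClosed T ∧ ClosedUnderQuotients T ∧ ClosedUnderExtensions T

/-- A wide subcategory: closed under kernels, cokernels and extensions. -/
def IsWideSubcategory (T : Set C) : Prop :=
  IsoClosed T ∧ ClosedUnderKernels T ∧ ClosedUnderCokernels T ∧ ClosedUnderExtensions T

end Defs

set_option linter.unusedSectionVars false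
set_option synthInstance.maxHeartbeats 1000000
set_option maxHeartbeats 1600000
section ICEProof

variable {k : Type} [Field k] {A : Type} [Ring A] [Algebra k A]
  {M : Type} [AddCommGroup M] [Module k M] [Module A M] [IsScalarTower k A M]

namespace ICEAux

/-- the idempotent (1,0,0) -/
def eA : OPE k A M := (1, 0, 0)
/-- the idempotent (0,0,1) -/
def eK : OPE k A M := (0, 0, 1)

lemma ope_mul (x y : OPE k A M) :
    x * y = (x.1 * y.1, x.1 • y.2.1 + y.2.2 • x.2.1, x.2.2 * y.2.2) := rfl

lemma eA_mul (b : OPE k A M) : (eA : OPE k A M) * b = (b.1, b.2.1, 0) := by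
  rw [ope_mul]; simp [eA, Prod.ext_iff]

lemma eK_mul (b : OPE k A M) : (eK : OPE k A M) * b = (0, 0, b.2.2) := by
  rw [ope_mul]; simp [eK, Prod.ext_iff]

lemma eA_mul_eA : (eA : OPE k A M) * eA = eA := by rw [eA_mul]; simp [eA]
lemma eA_mul_eK : (eA : OPE k A M) * eK = 0 := by
  rw [eA_mul]; simp [eK, Prod.ext_iff]
lemma eK_mul_eA : (eK : OPE k A M) * eA = 0 := by
  rw [eK_mul]; simp [eA, Prod.ext_iff]
lemma eK_mul_eK : (eK : OPE k A M) * eK = eK := by rw [eK_mul]; simp [eK]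
lemma eA_add_eK : (eA : OPE k A M) + eK = 1 := by
  show ((1,0,0) : OPE k A M) + (0,0,1) = (1,0,1)
  simp

lemma ofA_mul_ofA (a a' : A) : ((a,0,0) : OPE k A M) * (a',0,0) = (a*a',0,0) := by
  rw [ope_mul]; simp [Prod.ext_iff]
lemma ofA_mul_eA (a : A) : ((a,0,0) : OPE k A M) * eA = (a,0,0) := by
  rw [ope_mul]; simp [eA, Prod.ext_iff]
lemma eA_mul_ofA (a : A) : (eA : OPE k A M) * (a,0,0) = (a,0,0) := by
  rw [eA_mul]
lemma eA_mul_ofM (m : M) : (eA : OPE k A M) * (0,m,0) = (0,m,0) := by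
  rw [eA_mul]
lemma ofA_mul_ofM (a : A) (m : M) : ((a,0,0) : OPE k A M) * (0,m,0) = (0,a•m,0) := by
  rw [ope_mul]; simp [Prod.ext_iff]
lemma ofM_mul_eK (m : M) : ((0,m,0) : OPE k A M) * eK = (0,m,0) := by
  rw [ope_mul]; simp [eK, Prod.ext_iff]
lemma ofM_mul_ofK (m : M) (c : k) : ((0,m,0) : OPE k A M) * (0,0,c) = (0,c•m,0) := by
  rw [ope_mul]; simp [Prod.ext_iff]
lemma ofK_mul_ofK (c c' : k) : ((0,0,c) : OPE k A M) * (0,0,c') = (0,0,c*c') := by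
  rw [ope_mul]; simp [Prod.ext_iff]
lemma ofK_mul_eK (c : k) : ((0,0,c) : OPE k A M) * eK = (0,0,c) := by
  rw [ope_mul]; simp [eK, Prod.ext_iff]
lemma ofK_mul_eA (c : k) : ((0,0,c) : OPE k A M) * eA = 0 := by
  rw [ope_mul]; simp [eA, Prod.ext_iff]
lemma eK_mul_ofK (c : k) : (eK : OPE k A M) * (0,0,c) = (0,0,c) := by
  rw [eK_mul]
lemma ofA_add_ofA (a a' : A) : ((a,0,0) : OPE k A M) + (a',0,0) = (a+a',0,0) := by simp
lemma ofA_add_ofM (a : A) (m : M) : ((a,0,0) : OPE k A M) + (0,m,0) = (a,m,0) := by simp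
lemma ofK_add_ofK (c c' : k) : ((0,0,c) : OPE k A M) + (0,0,c') = (0,0,c+c') := by simp

variable (X : ModuleCat (OPE k A M))

/-- the `e_A`-part of a `B`-module, as an additive subgroup -/
def Nsg : AddSubgroup X where
  carrier := {x | (eA : OPE k A M) • x = x}
  add_mem' {a b} ha hb := by
    simp only [Set.mem_setOf_eq] at *
    rw [smul_add, ha, hb]
  zero_mem' := smul_zero _
  neg_mem' {a} ha := by
    simp only [Set.mem_setOf_eq] at *
    rw [smul_neg, ha]

lemma Nsg_mem_iff (x : X) : x ∈ Nsg X ↔ (eA : OPE k A M) • x = x := Iff.rfl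

instance : Module A (Nsg X) where
  smul a x := ⟨((a,0,0) : OPE k A M) • x.1, by
    show (eA : OPE k A M) • _ = _
    rw [← mul_smul, eA_mul_ofA]⟩
  one_smul x := Subtype.ext x.2
  mul_smul a a' x := Subtype.ext <| by
    show ((a*a',0,0) : OPE k A M) • x.1 = ((a,0,0) : OPE k A M) • (((a',0,0) : OPE k A M) • x.1)
    rw [← mul_smul, ofA_mul_ofA]
  smul_zero a := Subtype.ext <| smul_zero _
  smul_add a x y := Subtype.ext <| smul_add _ _ _
  add_smul a a' x := Subtype.ext <| by
    show ((a+a',0,0) : OPE k A M) • x.1 = ((a,0,0) : OPE k A M) • x.1 + ((a',0,0) : OPE k A M) • x.1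
    rw [← add_smul, ofA_add_ofA]
  zero_smul x := Subtype.ext <| by
    show ((0,0,0) : OPE k A M) • x.1 = 0
    exact zero_smul _ _

lemma nsmul_coe (a : A) (x : Nsg X) :
    ((a • x : Nsg X) : X) = ((a,0,0) : OPE k A M) • (x : X) := rfl

/-- the `e_K`-part of a `B`-module, as an additive subgroup -/
def Vsg : AddSubgroup X where
  carrier := {x | (eK : OPE k A M) • x = x}
  add_mem' {a b} ha hb := by
    simp only [Set.mem_setOf_eq] at *
    rw [smul_add, ha, hb]
  zero_mem' := smul_zero _
  neg_mem' {a} ha := by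
    simp only [Set.mem_setOf_eq] at *
    rw [smul_neg, ha]

instance : Module k (Vsg X) where
  smul c x := ⟨((0,0,c) : OPE k A M) • x.1, by
    show (eK : OPE k A M) • _ = _
    rw [← mul_smul, eK_mul_ofK]⟩
  one_smul x := Subtype.ext x.2
  mul_smul c c' x := Subtype.ext <| by
    show ((0,0,c*c') : OPE k A M) • x.1 = ((0,0,c) : OPE k A M) • (((0,0,c') : OPE k A M) • x.1)
    rw [← mul_smul, ofK_mul_ofK]
  smul_zero c := Subtype.ext <| smul_zero _
  smul_add c x y := Subtype.ext <| smul_add _ _ _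
  add_smul c c' x := Subtype.ext <| by
    show ((0,0,c+c') : OPE k A M) • x.1 = ((0,0,c) : OPE k A M) • x.1 + ((0,0,c') : OPE k A M) • x.1
    rw [← add_smul, ofK_add_ofK]
  zero_smul x := Subtype.ext <| by
    show ((0,0,0) : OPE k A M) • x.1 = 0
    exact zero_smul _ _

lemma vsmul_coe (c : k) (x : Vsg X) :
    ((c • x : Vsg X) : X) = ((0,0,c) : OPE k A M) • (x : X) := rfl

/-- the `e_A`-part as an `A`-module object -/
def Nmod : ModuleCat A := ModuleCat.of A (Nsg X)
/-- the `e_K`-part as a `k`-module object -/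
def Vmod : ModuleCat k := ModuleCat.of k (Vsg X)

variable {X} {Y Z : ModuleCat (OPE k A M)}

/-- functoriality of the `e_A`-part -/
def Nmap (f : X ⟶ Y) : Nmod X ⟶ Nmod Y := ModuleCat.ofHom {
  toFun x := ⟨f x.1, by
    show (eA : OPE k A M) • _ = _
    rw [← map_smul, x.2]⟩
  map_add' x y := Subtype.ext (map_add f.hom _ _)
  map_smul' a x := Subtype.ext <| by
    show f (((a,0,0) : OPE k A M) • x.1) = ((a,0,0) : OPE k A M) • f x.1
    exact map_smul f.hom _ _ }

lemma Nmap_coe (f : X ⟶ Y) (x : Nsg X) : (Nmap f x).1 = f x.1 := rfl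

/-- the `e_A`-part of a `B`-linear equivalence -/
def Nequiv (e : X ≃ₗ[OPE k A M] Y) : Nsg X ≃ₗ[A] Nsg Y where
  toFun x := ⟨e x.1, by
    show (eA : OPE k A M) • _ = _
    rw [← map_smul, x.2]⟩
  invFun y := ⟨e.symm y.1, by
    show (eA : OPE k A M) • _ = _
    rw [← map_smul, y.2]⟩
  left_inv x := Subtype.ext (e.symm_apply_apply x.1)
  right_inv y := Subtype.ext (e.apply_symm_apply y.1)
  map_add' x y := Subtype.ext (map_add e _ _)
  map_smul' a x := Subtype.ext <| by
    show e (((a,0,0) : OPE k A M) • x.1) = ((a,0,0) : OPE k A M) • e x.1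
    exact map_smul e _ _

/-- the `e_A`-part of an isomorphism of `B`-modules -/
noncomputable def NmodIso (i : X ≅ Y) : Nmod X ≅ Nmod Y :=
  (Nequiv i.toLinearEquiv).toModuleIso

/-- the predicate that `e_A` kills the module -/
def KT (X : ModuleCat (OPE k A M)) : Prop := ∀ x : X, (eA : OPE k A M) • x = 0

lemma kt_of_equiv (e : X ≃ₗ[OPE k A M] Y) (h : KT X) : KT Y := fun y => by
  rw [← e.apply_symm_apply y, ← map_smul, h, map_zero]

lemma kt_subsingleton (h : KT X) : Subsingleton (Nsg X) :=
  ⟨fun a b => Subtype.ext (by rw [← a.2, ← b.2, h, h])⟩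

lemma subsingleton_nsg_iso (h : KT X) : Subsingleton (Nmod X) := kt_subsingleton h

lemma ofM_add_ofM (m m' : M) : ((0,m,0) : OPE k A M) + (0,m',0) = (0,m+m',0) := by simp

variable (X)

lemma nsg_spec (n : Nsg X) : (eA : OPE k A M) • (n : X) = n := n.2
lemma vsg_spec (v : Vsg X) : (eK : OPE k A M) • (v : X) = v := v.2

lemma eA_smul_mem (x : X) : (eA : OPE k A M) • x ∈ Nsg X := by
  show (eA : OPE k A M) • ((eA : OPE k A M) • x) = (eA : OPE k A M) • x
  rw [← mul_smul, eA_mul_eA]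

lemma eK_smul_mem (x : X) : (eK : OPE k A M) • x ∈ Vsg X := by
  show (eK : OPE k A M) • ((eK : OPE k A M) • x) = (eK : OPE k A M) • x
  rw [← mul_smul, eK_mul_eK]

lemma eA_smul_vsg (v : Vsg X) : (eA : OPE k A M) • (v : X) = 0 := by
  rw [← vsg_spec X v, ← mul_smul, eA_mul_eK, zero_smul]

lemma eK_smul_nsg (n : Nsg X) : (eK : OPE k A M) • (n : X) = 0 := by
  rw [← nsg_spec X n, ← mul_smul, eK_mul_eA, zero_smul]

/-- the `Nsg` of a triple module is the `N` component -/
def tripNequiv (N : ModuleCat A) (V : ModuleCat k) (f : M ⊗[k] V →ₗ[A] N) :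
    Nsg (OPE.Trip k A M N V f) ≃ₗ[A] N where
  toFun x := x.1.1
  invFun n := ⟨(n, 0), by
    show ((eA : OPE k A M).1 • n + f ((eA : OPE k A M).2.1 ⊗ₜ[k] (0 : V)),
        (eA : OPE k A M).2.2 • (0 : V)) = ((n, 0) : ↥N × ↥V)
    simp [eA]⟩
  left_inv x := Subtype.ext <| by
    refine Prod.ext rfl ?_
    have h2 := congrArg Prod.snd x.2
    have : (0 : k) • x.1.2 = x.1.2 := h2
    rw [zero_smul] at this
    exact this
  right_inv n := rfl
  map_add' x y := rfl
  map_smul' a x := by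
    show a • x.1.1 + f ((0 : M) ⊗ₜ[k] x.1.2) = a • x.1.1
    simp

/-- the `k`-module structure on `Nsg X` coming from `algebraMap` -/
noncomputable instance : Module k (Nsg X) := Module.compHom _ (algebraMap k A)

lemma ksmul_nsg_coe (c : k) (n : Nsg X) :
    ((c • n : Nsg X) : X) = ((algebraMap k A c, 0, 0) : OPE k A M) • (n : X) := rfl

/-- the bilinear map `M × Vsg X → Nsg X` -/
def bilX : M →ₗ[k] (↥(Vsg X) →ₗ[k] ↥(Nsg X)) where
  toFun m :=
    { toFun := fun v => ⟨((0,m,0) : OPE k A M) • v.1, by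
        show (eA : OPE k A M) • _ = _
        rw [← mul_smul, eA_mul_ofM]⟩
      map_add' := fun v w => Subtype.ext <| smul_add _ _ _
      map_smul' := fun c v => Subtype.ext <| by
        show ((0,m,0) : OPE k A M) • (((0,0,c) : OPE k A M) • v.1)
            = ((algebraMap k A c, 0, 0) : OPE k A M) • (((0,m,0) : OPE k A M) • v.1)
        rw [← mul_smul, ← mul_smul, ofM_mul_ofK, ofA_mul_ofM, algebraMap_smul] }
  map_add' m m' := LinearMap.ext fun v => Subtype.ext <| by
    show ((0,m+m',0) : OPE k A M) • v.1
        = ((0,m,0) : OPE k A M) • v.1 + ((0,m',0) : OPE k A M) • v.1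
    rw [← add_smul, ofM_add_ofM]
  map_smul' c m := LinearMap.ext fun v => Subtype.ext <| by
    show ((0,c • m,0) : OPE k A M) • v.1
        = ((algebraMap k A c, 0, 0) : OPE k A M) • (((0,m,0) : OPE k A M) • v.1)
    rw [← mul_smul, ofA_mul_ofM, algebraMap_smul]

/-- the canonical `A`-linear map `M ⊗ Vsg X → Nsg X` -/
noncomputable def fX : M ⊗[k] ↥(Vsg X) →ₗ[A] ↥(Nsg X) where
  toFun := TensorProduct.lift (bilX X)
  map_add' := map_add _
  map_smul' a z := by
    induction z using TensorProduct.induction_on with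
    | zero => simp
    | tmul m v =>
        show TensorProduct.lift (bilX X) (a • (m ⊗ₜ[k] v))
            = a • TensorProduct.lift (bilX X) (m ⊗ₜ[k] v)
        rw [smul_tmul', TensorProduct.lift.tmul, TensorProduct.lift.tmul]
        refine Subtype.ext ?_
        show ((0, a • m, 0) : OPE k A M) • v.1
            = ((a,0,0) : OPE k A M) • (((0,m,0) : OPE k A M) • v.1)
        rw [← mul_smul, ofA_mul_ofM]
    | add z w hz hw =>
        show TensorProduct.lift (bilX X) (a • (z + w)) = a • TensorProduct.lift (bilX X) (z + w)
        rw [smul_add, map_add, map_add, smul_add]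
        exact congrArg₂ (· + ·) hz hw

lemma fX_tmul (m : M) (v : Vsg X) :
    ((fX X (m ⊗ₜ[k] v) : Nsg X) : X) = ((0,m,0) : OPE k A M) • (v : X) := rfl

/-- the decomposition of a `B`-module as a triple -/
noncomputable def tripEquiv :
    X ≃ₗ[OPE k A M] ↥(OPE.Trip k A M (Nmod X) (Vmod X) (fX X)) where
  toFun x := (⟨(eA : OPE k A M) • x, eA_smul_mem X x⟩, ⟨(eK : OPE k A M) • x, eK_smul_mem X x⟩)
  invFun p := p.1.1 + p.2.1
  left_inv x := by
    show (eA : OPE k A M) • x + (eK : OPE k A M) • x = x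
    rw [← add_smul, eA_add_eK, one_smul]
  right_inv p := by
    refine Prod.ext (Subtype.ext ?_) (Subtype.ext ?_)
    · show (eA : OPE k A M) • (p.1.1 + p.2.1) = p.1.1
      rw [smul_add, nsg_spec X p.1, eA_smul_vsg X p.2, add_zero]
    · show (eK : OPE k A M) • (p.1.1 + p.2.1) = p.2.1
      rw [smul_add, vsg_spec X p.2, eK_smul_nsg X p.1, zero_add]
  map_add' x y := by
    refine Prod.ext (Subtype.ext ?_) (Subtype.ext ?_)
    · show (eA : OPE k A M) • (x + y) = (eA : OPE k A M) • x + (eA : OPE k A M) • y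
      rw [smul_add]
    · show (eK : OPE k A M) • (x + y) = (eK : OPE k A M) • x + (eK : OPE k A M) • y
      rw [smul_add]
  map_smul' b x := by
    refine Prod.ext (Subtype.ext ?_) (Subtype.ext ?_)
    · show (eA : OPE k A M) • (b • x)
          = ((b.1,0,0) : OPE k A M) • ((eA : OPE k A M) • x)
            + ((0,b.2.1,0) : OPE k A M) • ((eK : OPE k A M) • x)
      rw [← mul_smul, ← mul_smul, ← mul_smul, eA_mul, ofA_mul_eA, ofM_mul_eK,
        ← add_smul, ofA_add_ofM]
    · show (eK : OPE k A M) • (b • x) = ((0,0,b.2.2) : OPE k A M) • ((eK : OPE k A M) • x)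
      rw [← mul_smul, ← mul_smul, eK_mul, ofK_mul_eK]

lemma eK_eq : (eK : OPE k A M) = 1 - eA := by
  rw [← eA_add_eK]; abel

/-- if `e_A` kills `X`, `X` is a `k`-module -/
def ktMod (h : KT X) : Module k ↥X where
  smul c x := ((0,0,c) : OPE k A M) • x
  one_smul x := by
    show ((0,0,(1:k)) : OPE k A M) • x = x
    have he : ((0,0,(1:k)) : OPE k A M) = eK := rfl
    rw [he, eK_eq, sub_smul, one_smul, h x, sub_zero]
  mul_smul c c' x := by
    show ((0,0,c*c') : OPE k A M) • x = ((0,0,c) : OPE k A M) • (((0,0,c') : OPE k A M) • x)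
    rw [← mul_smul, ofK_mul_ofK]
  smul_zero c := smul_zero (((0,0,c) : OPE k A M))
  smul_add c x y := smul_add (((0,0,c) : OPE k A M)) x y
  add_smul c c' x := by
    show ((0,0,c+c') : OPE k A M) • x = ((0,0,c) : OPE k A M) • x + ((0,0,c') : OPE k A M) • x
    rw [← add_smul, ofK_add_ofK]
  zero_smul x := by
    show ((0,0,(0:k)) : OPE k A M) • x = 0
    exact zero_smul _ _

/-- the `k`-module object on `X` when `e_A` kills `X` -/
def ktV (h : KT X) : ModuleCat k := @ModuleCat.of k _ ↥X _ (ktMod X h)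

/-- if `e_A` kills `X`, then `X` is the restriction of scalars of a `k`-module -/
def ktEquiv (h : KT X) : X ≃ₗ[OPE k A M] ↥((OPE.G k A M).obj (ktV X h)) where
  toFun x := x
  invFun x := x
  left_inv _ := rfl
  right_inv _ := rfl
  map_add' _ _ := rfl
  map_smul' b x := by
    show b • x = ((0,0,b.2.2) : OPE k A M) • x
    have hb : b = (eA : OPE k A M) * b + ((0,0,b.2.2) : OPE k A M) := by
      rw [eA_mul]; show b = ((b.1, b.2.1, 0) : OPE k A M) + (0,0,b.2.2); simp
    conv_lhs => rw [hb]
    rw [add_smul, mul_smul, h (b • x), zero_add]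

lemma kt_G (V : ModuleCat k) : KT ((OPE.G k A M).obj V) := fun v => by
  let w : ↥V := v
  have h : (0:k) • w = 0 := zero_smul _ _
  exact h

variable {X}

lemma zero_mem_of_nonempty {T_A : Set (ModuleCat A)} (hT : IsICEClosed T_A)
    (hne : T_A.Nonempty) (Z : ModuleCat A) (hZ : Subsingleton Z) : Z ∈ T_A := by
  obtain ⟨W, hW⟩ := hne
  have h0 : cokernel (𝟙 W) ∈ T_A := hT.2.2.1 hW hW (𝟙 W)
  exact hT.1 ((cokernel.ofEpi (𝟙 W)) ≪≫ (ModuleCat.isZero_of_subsingleton Z).isoZero.symm) h0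

/-- the subcategory `T_B` -/
def Sset (T_A : Set (ModuleCat A)) : Set (ModuleCat (OPE k A M)) :=
  {X : ModuleCat (OPE k A M) |
      (∃ N ∈ T_A, ∃ (V : ModuleCat k) (f : M ⊗[k] V →ₗ[A] N),
        Nonempty (X ≅ OPE.Trip k A M N V f)) ∨
      (∃ V : ModuleCat k, Nonempty (X ≅ (OPE.G k A M).obj V))}

lemma mem_S_iff {T_A : Set (ModuleCat A)} (hIso : IsoClosed T_A)
    (X : ModuleCat (OPE k A M)) :
    X ∈ Sset T_A ↔ (Nmod X ∈ T_A ∨ KT X) := by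
  constructor
  · rintro (⟨N, hN, V, f, ⟨i⟩⟩ | ⟨V, ⟨i⟩⟩)
    · left
      exact hIso (((Nequiv i.toLinearEquiv).trans (tripNequiv N V f)).symm.toModuleIso) hN
    · right
      exact kt_of_equiv i.toLinearEquiv.symm (kt_G V)
  · rintro (hN | hK)
    · exact Or.inl ⟨Nmod X, hN, Vmod X, fX X, ⟨(tripEquiv X).toModuleIso⟩⟩
    · exact Or.inr ⟨ktV X hK, ⟨(ktEquiv X hK).toModuleIso⟩⟩

section Maps
variable {X Y : ModuleCat (OPE k A M)} (f : X ⟶ Y)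

lemma mem_range_Nmap (n : Nsg Y) (h : n.1 ∈ LinearMap.range f.hom) :
    n ∈ LinearMap.range (Nmap f).hom := by
  obtain ⟨x, hx⟩ := h
  refine ⟨⟨(eA : OPE k A M) • x, eA_smul_mem X x⟩, Subtype.ext ?_⟩
  show f ((eA : OPE k A M) • x) = n.1
  rw [map_smul, hx, n.2]

/-- the `A`-module structure on the `e_A`-part of a bundled module -/
instance nsgOfModule (T : Type) [AddCommGroup T] [Module (OPE k A M) T] :
    Module A (Nsg (ModuleCat.of (OPE k A M) T)) :=
  instModuleSubtypeCarrierOPEMemAddSubgroupNsg _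

/-- the `e_A`-part of the range is the range of the `e_A`-parts -/
def rangeEquiv :
    ↥(LinearMap.range (Nmap f).hom)
      ≃ₗ[A] ↥(Nsg (ModuleCat.of (OPE k A M) (LinearMap.range f.hom))) where
  toFun z := ⟨⟨z.1.1, by
      obtain ⟨n, hn⟩ := z.2
      exact ⟨n.1, congrArg Subtype.val hn⟩⟩, Subtype.ext z.1.2⟩
  invFun w := ⟨⟨w.1.1, congrArg Subtype.val w.2⟩, mem_range_Nmap f _ w.1.2⟩
  left_inv z := Subtype.ext (Subtype.ext rfl)
  right_inv w := Subtype.ext (Subtype.ext rfl)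
  map_add' z z' := Subtype.ext (Subtype.ext rfl)
  map_smul' a z := Subtype.ext (Subtype.ext rfl)

/-- the projection from `Nsg Y` to the `e_A`-part of the quotient -/
def qmap : ↑(Nmod Y) →ₗ[A]
    ↥(Nsg (ModuleCat.of (OPE k A M) (↥Y ⧸ LinearMap.range f.hom))) where
  toFun n := ⟨Submodule.Quotient.mk n.1, by
    show (eA : OPE k A M) • Submodule.Quotient.mk n.1 = Submodule.Quotient.mk n.1
    rw [← Submodule.Quotient.mk_smul, n.2]⟩
  map_add' n n' := Subtype.ext rfl
  map_smul' a n := Subtype.ext <| by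
    show Submodule.Quotient.mk (((a,0,0) : OPE k A M) • n.1)
        = ((a,0,0) : OPE k A M) • Submodule.Quotient.mk n.1
    rw [Submodule.Quotient.mk_smul]

lemma qmap_surjective : Function.Surjective (qmap f) := by
  rintro ⟨q, hq⟩
  obtain ⟨y, rfl⟩ := Submodule.Quotient.mk_surjective _ q
  have hq' : (eA : OPE k A M) • (Submodule.Quotient.mk y : ↥Y ⧸ LinearMap.range f.hom)
      = Submodule.Quotient.mk y := hq
  refine ⟨⟨(eA : OPE k A M) • y, eA_smul_mem Y y⟩, Subtype.ext ?_⟩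
  show (Submodule.Quotient.mk ((eA : OPE k A M) • y) : ↥Y ⧸ LinearMap.range f.hom)
      = Submodule.Quotient.mk y
  rw [Submodule.Quotient.mk_smul]
  exact hq'

lemma qmap_ker : LinearMap.ker (qmap f) = LinearMap.range (Nmap f).hom := by
  ext n
  constructor
  · intro hn
    have h1 : (Submodule.Quotient.mk n.1 : ↥Y ⧸ LinearMap.range f.hom) = 0 :=
      congrArg Subtype.val hn
    rw [Submodule.Quotient.mk_eq_zero] at h1
    exact mem_range_Nmap f n h1
  · rintro ⟨m, rfl⟩
    refine Subtype.ext ?_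
    show (Submodule.Quotient.mk (f m.1) : ↥Y ⧸ LinearMap.range f.hom) = 0
    rw [Submodule.Quotient.mk_eq_zero]
    exact ⟨m.1, rfl⟩

/-- the `e_A`-part of the quotient is the quotient of the `e_A`-parts -/
noncomputable def quotEquiv :
    (↥(Nsg Y) ⧸ LinearMap.range (Nmap f).hom)
      ≃ₗ[A] ↥(Nsg (ModuleCat.of (OPE k A M) (↥Y ⧸ LinearMap.range f.hom))) :=
  (Submodule.quotEquivOfEq _ _ (qmap_ker f).symm).trans
    ((qmap f).quotKerEquivOfSurjective (qmap_surjective f))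

end Maps

section KTclosure
variable {X Y : ModuleCat (OPE k A M)} (f : X ⟶ Y)

lemma kt_range_of_left (h : KT X) :
    KT (ModuleCat.of (OPE k A M) (LinearMap.range f.hom)) := by
  rintro ⟨y, hy⟩
  obtain ⟨x, rfl⟩ := hy
  refine Subtype.ext ?_
  show (eA : OPE k A M) • f x = 0
  rw [← map_smul, h x, map_zero]

lemma kt_range_of_right (h : KT Y) :
    KT (ModuleCat.of (OPE k A M) (LinearMap.range f.hom)) := fun z => Subtype.ext (h z.1)

lemma kt_image_of_left (h : KT X) : KT (image f) :=
  kt_of_equiv (ModuleCat.imageIsoRange f).symm.toLinearEquiv (kt_range_of_left f h)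

lemma kt_image_of_right (h : KT Y) : KT (image f) :=
  kt_of_equiv (ModuleCat.imageIsoRange f).symm.toLinearEquiv (kt_range_of_right f h)

lemma kt_cokernel (h : KT Y) : KT (cokernel f) := by
  have h1 : KT (ModuleCat.of (OPE k A M) (↥Y ⧸ LinearMap.range f.hom)) := by
    intro q
    obtain ⟨y, rfl⟩ := Submodule.Quotient.mk_surjective _ q
    show (eA : OPE k A M) • (Submodule.Quotient.mk y : ↥Y ⧸ LinearMap.range f.hom) = 0
    rw [← Submodule.Quotient.mk_smul, h y]
    exact Submodule.Quotient.mk_zero _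
  exact kt_of_equiv (ModuleCat.cokernelIsoRangeQuotient f).symm.toLinearEquiv h1

end KTclosure

section SC
variable (S : ShortComplex (ModuleCat (OPE k A M)))

/-- the `e_A`-part of a short complex -/
noncomputable def NSC : ShortComplex (ModuleCat A) :=
  ShortComplex.mk (Nmap S.f) (Nmap S.g) (by
    ext n
    refine Subtype.ext ?_
    show S.g (S.f n.1) = 0
    exact S.moduleCat_zero_apply n.1)

lemma NSC_shortExact (hS : S.ShortExact) : (NSC S).ShortExact := by
  have hinj : Function.Injective S.f := by
    rw [← ModuleCat.mono_iff_injective]; exact hS.mono_f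
  have hsurj : Function.Surjective S.g := by
    rw [← ModuleCat.epi_iff_surjective]; exact hS.epi_g
  have hex := S.moduleCat_exact_iff.1 hS.exact
  have hm : Mono (NSC S).f := by
    rw [ModuleCat.mono_iff_injective]
    intro a b hab
    exact Subtype.ext (hinj (congrArg Subtype.val hab))
  have he : Epi (NSC S).g := by
    rw [ModuleCat.epi_iff_surjective]
    rintro n3
    obtain ⟨x2, hx2⟩ := hsurj n3.1
    refine ⟨⟨(eA : OPE k A M) • x2, eA_smul_mem _ x2⟩, Subtype.ext ?_⟩
    show S.g ((eA : OPE k A M) • x2) = n3.1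
    rw [map_smul, hx2, n3.2]
  refine ⟨?_⟩
  · rw [ShortComplex.moduleCat_exact_iff]
    rintro n2 h
    have h' : S.g n2.1 = 0 := congrArg Subtype.val h
    obtain ⟨x1, hx1⟩ := hex n2.1 h'
    refine ⟨⟨(eA : OPE k A M) • x1, eA_smul_mem _ x1⟩, Subtype.ext ?_⟩
    show S.f ((eA : OPE k A M) • x1) = n2.1
    rw [map_smul, hx1, n2.2]

lemma kt_extension (hS : S.ShortExact) (h1 : KT S.X₁) (h3 : KT S.X₃) : KT S.X₂ := by
  intro x2
  have hg : S.g ((eA : OPE k A M) • x2) = 0 := by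
    rw [map_smul, h3]
  obtain ⟨x1, hx1⟩ := S.moduleCat_exact_iff.1 hS.exact _ hg
  have : (eA : OPE k A M) • x2 = (eA : OPE k A M) • ((eA : OPE k A M) • x2) := by
    rw [← mul_smul, eA_mul_eA]
  rw [this, ← hx1, ← map_smul, h1, map_zero]

end SC

end ICEAux

end ICEProof
/-- Theorem 3.1(2): if `T_A` is an ICE-closed subcategory of `mod A`, then the subcategory
of `mod B` consisting of all triples `(N, V, f)` with `N ∈ T_A` together with all triples
`(0, V, 0)` is ICE-closed, where `B` is the one-point extension of `A` by `M`. -/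
theorem ICEClosed_extend_full (k : Type) [Field k] (A : Type) [Ring A] [Algebra k A]
    (M : Type) [AddCommGroup M] [Module k M] [Module A M] [IsScalarTower k A M]
    (T_A : Set (ModuleCat A)) (hT : IsICEClosed T_A) :
    IsICEClosed {X : ModuleCat (OPE k A M) |
      (∃ N ∈ T_A, ∃ (V : ModuleCat k) (f : M ⊗[k] V →ₗ[A] N),
        Nonempty (X ≅ OPE.Trip k A M N V f)) ∨
      (∃ V : ModuleCat k, Nonempty (X ≅ (OPE.G k A M).obj V))} := by
  open ICEAux in
  show IsICEClosed (ICEAux.Sset T_A)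
  refine ⟨?_, ?_, ?_, ?_⟩
  · -- closed under isomorphisms
    intro X Y i hX
    rw [mem_S_iff hT.1] at hX ⊢
    rcases hX with h | h
    · exact Or.inl (hT.1 (NmodIso i) h)
    · exact Or.inr (kt_of_equiv i.toLinearEquiv h)
  · -- closed under images
    intro X Y hX hY f
    rw [mem_S_iff hT.1] at hX hY ⊢
    rcases hX with hNX | hKX
    · rcases hY with hNY | hKY
      · refine Or.inl (hT.1 ?_ (hT.2.1 hNX hNY (Nmap f)))
        exact (ModuleCat.imageIsoRange (Nmap f)) ≪≫ (rangeEquiv f).toModuleIso ≪≫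
          (NmodIso (ModuleCat.imageIsoRange f)).symm
      · exact Or.inr (kt_image_of_right f hKY)
    · exact Or.inr (kt_image_of_left f hKX)
  · -- closed under cokernels
    intro X Y hX hY f
    rw [mem_S_iff hT.1] at hX hY ⊢
    rcases hY with hNY | hKY
    · refine Or.inl ?_
      have hNX : Nmod X ∈ T_A := by
        rcases hX with h | h
        · exact h
        · exact zero_mem_of_nonempty hT ⟨_, hNY⟩ _ (subsingleton_nsg_iso h)
      refine hT.1 ?_ (hT.2.2.1 hNX hNY (Nmap f))
      exact (ModuleCat.cokernelIsoRangeQuotient (Nmap f)) ≪≫ (quotEquiv f).toModuleIso ≪≫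
        (NmodIso (ModuleCat.cokernelIsoRangeQuotient f)).symm
    · exact Or.inr (kt_cokernel f hKY)
  · -- closed under extensions
    intro S hS h1 h3
    rw [mem_S_iff hT.1] at h1 h3 ⊢
    rcases h1 with h1 | h1
    · have h3' : Nmod S.X₃ ∈ T_A := by
        rcases h3 with h | h
        · exact h
        · exact zero_mem_of_nonempty hT ⟨_, h1⟩ _ (subsingleton_nsg_iso h)
      exact Or.inl (hT.2.2.2 (NSC S) (NSC_shortExact S hS) h1 h3')
    · rcases h3 with h3 | h3
      · have h1' : Nmod S.X₁ ∈ T_A :=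
          zero_mem_of_nonempty hT ⟨_, h3⟩ _ (subsingleton_nsg_iso h1)
        exact Or.inl (hT.2.2.2 (NSC S) (NSC_shortExact S hS) h1' h3)
      · exact Or.inr (kt_extension S hS h1 h3)
end

section
/- Let B be the one-point extension of A by M. If S_A is an epibrick in mod A, then S'_B = { (s, 0, 0) | s ∈ S_A } ∪ { (0, k, 0) } is an epibrick in mod B. -/
open CategoryTheory Limits TensorProduct

open CategoryTheory Limits

section BrickDefs
variable {R : Type} [Ring R]

/-- A brick: a nonzero module all of whose nonzero endomorphisms are invertible,
i.e. its endomorphism ring is a division ring. -/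
def IsBrick (X : ModuleCat R) : Prop :=
  (¬ IsZero X) ∧ ∀ f : X ⟶ X, f = 0 ∨ IsIso f

/-- A semibrick: a set of bricks such that every morphism between its elements is
zero or an isomorphism. -/
def IsSemibrick (S : Set (ModuleCat R)) : Prop :=
  (∀ X ∈ S, IsBrick X) ∧ ∀ X ∈ S, ∀ Y ∈ S, ∀ f : X ⟶ Y, f = 0 ∨ IsIso f

/-- A monobrick: a set of bricks such that every morphism between its elements is
zero or injective. -/
def IsMonobrick (S : Set (ModuleCat R)) : Prop :=
  (∀ X ∈ S, IsBrick X) ∧ ∀ X ∈ S, ∀ Y ∈ S, ∀ f : X ⟶ Y, f = 0 ∨ Function.Injective f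

/-- An epibrick: a set of bricks such that every morphism between its elements is
zero or surjective. -/
def IsEpibrick (S : Set (ModuleCat R)) : Prop :=
  (∀ X ∈ S, IsBrick X) ∧ ∀ X ∈ S, ∀ Y ∈ S, ∀ f : X ⟶ Y, f = 0 ∨ Function.Surjective f

end BrickDefs

section Aux

variable (k : Type) [Field k] (A : Type) [Ring A] [Algebra k A]
  (M : Type) [AddCommGroup M] [Module k M] [Module A M] [IsScalarTower k A M]

/-- Transport a `B`-linear map between restricted modules back to an `A`-linear map. -/
noncomputable def OPE.unF {s t : ModuleCat A} (φ : (OPE.F k A M).obj s ⟶ (OPE.F k A M).obj t) :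
    s ⟶ t := ModuleCat.ofHom
  { toFun := φ
    map_add' := φ.hom.map_add
    map_smul' := fun a x => φ.hom.map_smul ((a, (0 : M), (0 : k)) : OPE k A M) x }

lemma OPE.unF_zero {s t : ModuleCat A} (φ : (OPE.F k A M).obj s ⟶ (OPE.F k A M).obj t)
    (h : OPE.unF k A M φ = 0) : φ = 0 :=
  ModuleCat.hom_ext (LinearMap.ext fun x => DFunLike.congr_fun (congrArg ModuleCat.Hom.hom h) x)

/-- Identity cast from the carrier of `(0, k, 0)` to `k`. -/
def OPE.toK (x : (OPE.G k A M).obj (ModuleCat.of k k)) : k := x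

/-- Identity cast from `k` to the carrier of `(0, k, 0)`. -/
def OPE.ofK (x : k) : (OPE.G k A M).obj (ModuleCat.of k k) := x

lemma ModuleCat.isZero_iff' {R : Type} [Ring R] (X : ModuleCat R) :
    IsZero X ↔ ∀ x : X, x = 0 := by
  constructor
  · intro h x
    have h0 : 𝟙 X = 0 := h.eq_of_src _ _
    calc x = (𝟙 X : X ⟶ X).hom x := rfl
    _ = (0 : X ⟶ X).hom x := by rw [h0]
    _ = 0 := rfl
  · intro h
    have : Subsingleton X := ⟨fun a b => by rw [h a, h b]⟩
    exact ModuleCat.isZero_of_subsingleton X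

end Aux

/-- Theorem 3.5(2): if `S_A` is an epibrick in `mod A`, then
`S'_B = { (s,0,0) | s ∈ S_A } ∪ { (0,k,0) }` is an epibrick in `mod B`. -/
theorem epibrick_extend_simple (k : Type) [Field k] (A : Type) [Ring A] [Algebra k A]
    (M : Type) [AddCommGroup M] [Module k M] [Module A M] [IsScalarTower k A M]
    (S_A : Set (ModuleCat A)) (hS : IsEpibrick S_A) :
    IsEpibrick ((OPE.F k A M).obj '' S_A ∪ {(OPE.G k A M).obj (ModuleCat.of k k)}) := by
  obtain ⟨hSb, hSm⟩ := hS
  have keyG : ∀ {Y : ModuleCat (OPE k A M)},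
      Y = (OPE.G k A M).obj (ModuleCat.of k k) →
      ∀ φ : (OPE.G k A M).obj (ModuleCat.of k k) ⟶ (OPE.G k A M).obj (ModuleCat.of k k),
      ∀ x : k, OPE.toK k A M (φ (OPE.ofK k A M x))
        = x * OPE.toK k A M (φ (OPE.ofK k A M 1)) := by
    intro Y _ φ x
    have h : OPE.toK k A M (φ (OPE.ofK k A M (x * 1)))
        = x * OPE.toK k A M (φ (OPE.ofK k A M 1)) :=
      φ.hom.map_smul (((0 : A), (0 : M), x) : OPE k A M) (OPE.ofK k A M 1)
    rwa [mul_one] at h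
  have keyG' := keyG rfl
  have zeroG : ∀ φ : (OPE.G k A M).obj (ModuleCat.of k k) ⟶ (OPE.G k A M).obj (ModuleCat.of k k),
      OPE.toK k A M (φ (OPE.ofK k A M 1)) = 0 → φ = 0 := by
    intro φ h1
    apply ModuleCat.hom_ext; apply LinearMap.ext; intro x
    rw [ModuleCat.hom_zero, LinearMap.zero_apply]
    have h := keyG' φ (OPE.toK k A M x)
    rw [h1, mul_zero] at h
    exact h
  have surjG : ∀ φ : (OPE.G k A M).obj (ModuleCat.of k k) ⟶ (OPE.G k A M).obj (ModuleCat.of k k),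
      OPE.toK k A M (φ (OPE.ofK k A M 1)) ≠ 0 → Function.Surjective φ := by
    intro φ h1 y
    refine ⟨OPE.ofK k A M (OPE.toK k A M y * (OPE.toK k A M (φ (OPE.ofK k A M 1)))⁻¹), ?_⟩
    have h2 := keyG' φ (OPE.toK k A M y * (OPE.toK k A M (φ (OPE.ofK k A M 1)))⁻¹)
    rw [mul_assoc, inv_mul_cancel₀ h1, mul_one] at h2
    exact h2
  have zeroFG : ∀ s : ModuleCat A,
      ∀ φ : (OPE.F k A M).obj s ⟶ (OPE.G k A M).obj (ModuleCat.of k k), φ = 0 := by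
    intro s φ
    apply ModuleCat.hom_ext; apply LinearMap.ext; intro x
    rw [ModuleCat.hom_zero, LinearMap.zero_apply]
    have hx : (((1 : A), (0 : M), (0 : k)) : OPE k A M) • x = x :=
      one_smul A (show (s : Type) from x)
    calc φ x = φ ((((1 : A), (0 : M), (0 : k)) : OPE k A M) • x) := by rw [hx]
    _ = (((1 : A), (0 : M), (0 : k)) : OPE k A M) • φ x := φ.hom.map_smul _ x
    _ = 0 := zero_smul k (show k from φ x)
  have zeroGF : ∀ t : ModuleCat A,
      ∀ φ : (OPE.G k A M).obj (ModuleCat.of k k) ⟶ (OPE.F k A M).obj t, φ = 0 := by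
    intro t φ
    apply ModuleCat.hom_ext; apply LinearMap.ext; intro x
    rw [ModuleCat.hom_zero, LinearMap.zero_apply]
    have hx : (((0 : A), (0 : M), (1 : k)) : OPE k A M) • x = x :=
      one_smul k (show k from x)
    calc φ x = φ ((((0 : A), (0 : M), (1 : k)) : OPE k A M) • x) := by rw [hx]
    _ = (((0 : A), (0 : M), (1 : k)) : OPE k A M) • φ x := φ.hom.map_smul _ x
    _ = 0 := zero_smul A (show (t : Type) from φ x)
  constructor
  · rintro X (⟨s, hs, rfl⟩ | hX)
    · obtain ⟨hs0, hse⟩ := hSb s hs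
      constructor
      · intro h
        apply hs0
        rw [ModuleCat.isZero_iff'] at h ⊢
        exact h
      · intro φ
        rcases hse (OPE.unF k A M φ) with h | h
        · exact Or.inl (OPE.unF_zero k A M φ h)
        · right
          rw [ConcreteCategory.isIso_iff_bijective] at h ⊢
          exact h
    · rw [Set.mem_singleton_iff] at hX; subst hX
      constructor
      · rw [ModuleCat.isZero_iff']
        intro h
        exact one_ne_zero (α := k) (h (OPE.ofK k A M 1))
      · intro φ
        by_cases h1 : OPE.toK k A M (φ (OPE.ofK k A M 1)) = 0
        · exact Or.inl (zeroG φ h1)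
        · right
          rw [ConcreteCategory.isIso_iff_bijective]
          refine ⟨?_, surjG φ h1⟩
          intro a b hab
          have ha := keyG' φ (OPE.toK k A M a)
          have hb := keyG' φ (OPE.toK k A M b)
          have hc : OPE.toK k A M a * OPE.toK k A M (φ (OPE.ofK k A M 1))
              = OPE.toK k A M b * OPE.toK k A M (φ (OPE.ofK k A M 1)) := by
            rw [← ha, ← hb]
            exact congrArg (OPE.toK k A M) hab
          have hab' : OPE.toK k A M a = OPE.toK k A M b := mul_right_cancel₀ h1 hc
          exact hab'
  · rintro X (⟨s, hs, rfl⟩ | hX) Y (⟨t, ht, rfl⟩ | hY) φ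
    · rcases hSm s hs t ht (OPE.unF k A M φ) with h | h
      · exact Or.inl (OPE.unF_zero k A M φ h)
      · exact Or.inr h
    · rw [Set.mem_singleton_iff] at hY; subst hY
      exact Or.inl (zeroFG s φ)
    · rw [Set.mem_singleton_iff] at hX; subst hX
      exact Or.inl (zeroGF t φ)
    · rw [Set.mem_singleton_iff] at hX; subst hX
      rw [Set.mem_singleton_iff] at hY; subst hY
      by_cases h1 : OPE.toK k A M (φ (OPE.ofK k A M 1)) = 0
      · exact Or.inl (zeroG φ h1)
      · exact Or.inr (surjG φ h1)
end
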